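/- Marsaglia polar method: let (U, V) be uniformly distributed on the punctured open unit disk A = {(u,v) ∈ ℝ² : 0 < u² + v² < 1} (law equal to Lebesgue measure restricted to A, normalized), let S = U² + V², and define X = U·√(−2 ln S / S) and Y = V·√(−2 ln S / S). Then the joint law of (X, Y) is the product of two real Gaussian measures each with mean 0 and variance 1; in particular X and Y are independent standard normal random variables. -/

import Mathlib

open MeasureTheory ProbabilityTheory Real Set
open scoped ENNReal

/-- The punctured open unit disk in `ℝ²`. -/
def puncturedDisk : Set (ℝ × ℝ) :=
  {p : ℝ × ℝ | 0 < p.1 ^ 2 + p.2 ^ 2 ∧ p.1 ^ 2 + p.2 ^ 2 < 1}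

/-- The Marsaglia polar transformation
`(u, v) ↦ (u·√(−2 ln s / s), v·√(−2 ln s / s))` with `s = u² + v²`. -/
noncomputable def marsaglia (p : ℝ × ℝ) : ℝ × ℝ :=
  (p.1 * Real.sqrt (-2 * Real.log (p.1 ^ 2 + p.2 ^ 2) / (p.1 ^ 2 + p.2 ^ 2)),
   p.2 * Real.sqrt (-2 * Real.log (p.1 ^ 2 + p.2 ^ 2) / (p.1 ^ 2 + p.2 ^ 2)))

noncomputable def mc (t : ℝ) : ℝ := Real.sqrt (Real.exp (-t/2) / t)

noncomputable def mcd (t : ℝ) : ℝ :=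
  1 / (2 * mc t) * ((-(Real.exp (-t/2)) / 2 * t - Real.exp (-t/2)) / t ^ 2)

noncomputable def minv (p : ℝ × ℝ) : ℝ × ℝ :=
  (p.1 * mc (p.1 ^ 2 + p.2 ^ 2), p.2 * mc (p.1 ^ 2 + p.2 ^ 2))

def Tset : Set (ℝ × ℝ) := {p : ℝ × ℝ | 0 < p.1 ^ 2 + p.2 ^ 2}

lemma hasDerivAt_mc {t : ℝ} (ht : 0 < t) : HasDerivAt mc (mcd t) t := by
  have hu : HasDerivAt (fun t : ℝ => Real.exp (-t/2) / t)
      ((-(Real.exp (-t/2)) / 2 * t - Real.exp (-t/2) * 1) / t ^ 2) t := by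
    have h1 : HasDerivAt (fun t : ℝ => -t/2) (-1/2) t := by
      simpa using ((hasDerivAt_id t).neg.div_const 2)
    have h2 : HasDerivAt (fun t : ℝ => Real.exp (-t/2)) (Real.exp (-t/2) * (-1/2)) t :=
      (Real.hasDerivAt_exp _).comp t h1
    have := h2.div (hasDerivAt_id t) ht.ne'
    refine this.congr_deriv ?_
    simp only [id_eq]
    ring
  have hpos : 0 < Real.exp (-t/2) / t := div_pos (Real.exp_pos _) ht
  have := hu.sqrt hpos.ne'
  convert this using 1
  · rfl
  unfold mcd mc
  field_simp

lemma mc_pos {t : ℝ} (ht : 0 < t) : 0 < mc t :=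
  Real.sqrt_pos.2 (div_pos (Real.exp_pos _) ht)

lemma mc_sq {t : ℝ} (ht : 0 < t) : mc t ^ 2 = Real.exp (-t/2) / t :=
  Real.sq_sqrt (div_pos (Real.exp_pos _) ht).le

lemma mc_mul_mcd {t : ℝ} (ht : 0 < t) :
    mc t * mcd t = (-(Real.exp (-t/2)) / 2 * t - Real.exp (-t/2)) / t ^ 2 / 2 := by
  have h := (mc_pos ht).ne'
  unfold mcd
  field_simp

noncomputable def mB (p : ℝ × ℝ) : (ℝ × ℝ) →L[ℝ] (ℝ × ℝ) :=
  LinearMap.toContinuousLinearMap (Matrix.toLin (Module.Basis.finTwoProd ℝ) (Module.Basis.finTwoProd ℝ)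
    !![mc (p.1 ^ 2 + p.2 ^ 2) + 2 * mcd (p.1 ^ 2 + p.2 ^ 2) * p.1 ^ 2,
       2 * mcd (p.1 ^ 2 + p.2 ^ 2) * p.1 * p.2;
       2 * mcd (p.1 ^ 2 + p.2 ^ 2) * p.1 * p.2,
       mc (p.1 ^ 2 + p.2 ^ 2) + 2 * mcd (p.1 ^ 2 + p.2 ^ 2) * p.2 ^ 2])

lemma hasFDerivAt_minv {p : ℝ × ℝ} (hp : p ∈ Tset) : HasFDerivAt minv (mB p) p := by
  have ht : 0 < p.1 ^ 2 + p.2 ^ 2 := hp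
  have hQ : HasFDerivAt (fun q : ℝ × ℝ => q.1 ^ 2 + q.2 ^ 2)
      ((2 * p.1) • ContinuousLinearMap.fst ℝ ℝ ℝ + (2 * p.2) • ContinuousLinearMap.snd ℝ ℝ ℝ) p := by
    have h1 : HasFDerivAt (fun q : ℝ × ℝ => q.1 ^ 2)
        ((2 * p.1) • ContinuousLinearMap.fst ℝ ℝ ℝ) p := by
      have := (hasFDerivAt_fst (p := p) (𝕜 := ℝ)).mul (hasFDerivAt_fst (p := p) (𝕜 := ℝ))
      refine HasFDerivAt.congr_of_eventuallyEq (this.congr_fderiv ?_) (Filter.Eventually.of_forall fun q => ?_)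
      · module
      · simp only [Pi.mul_apply]; ring
    have h2 : HasFDerivAt (fun q : ℝ × ℝ => q.2 ^ 2)
        ((2 * p.2) • ContinuousLinearMap.snd ℝ ℝ ℝ) p := by
      have := (hasFDerivAt_snd (p := p) (𝕜 := ℝ)).mul (hasFDerivAt_snd (p := p) (𝕜 := ℝ))
      refine HasFDerivAt.congr_of_eventuallyEq (this.congr_fderiv ?_) (Filter.Eventually.of_forall fun q => ?_)
      · module
      · simp only [Pi.mul_apply]; ring
    exact h1.add h2
  have hc := (hasDerivAt_mc ht).comp_hasFDerivAt p hQ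
  have h1 := (hasFDerivAt_fst (p := p) (𝕜 := ℝ)).mul hc
  have h2 := (hasFDerivAt_snd (p := p) (𝕜 := ℝ)).mul hc
  have := h1.prodMk h2
  refine this.congr_fderiv ?_
  unfold mB
  rw [Matrix.toLin_finTwoProd_toContinuousLinearMap]
  refine ContinuousLinearMap.ext fun q => Prod.ext ?_ ?_ <;> simp [smul_smul] <;> ring

lemma mB_det {p : ℝ × ℝ} (hp : p ∈ Tset) :
    (mB p).det = -(Real.exp (-(p.1 ^ 2 + p.2 ^ 2) / 2) / 2) := by
  have ht : 0 < p.1 ^ 2 + p.2 ^ 2 := hp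
  set t := p.1 ^ 2 + p.2 ^ 2 with htdef
  have h1 : (mB p).det = mc t ^ 2 + 2 * (mc t * mcd t) * t := by
    unfold mB
    rw [LinearMap.det_toContinuousLinearMap, LinearMap.det_toLin, Matrix.det_fin_two_of]
    ring
  rw [h1, mc_sq ht, mc_mul_mcd ht]
  field_simp
  ring

lemma sq_add_sq_minv {p : ℝ × ℝ} (hp : p ∈ Tset) :
    (minv p).1 ^ 2 + (minv p).2 ^ 2 = Real.exp (-(p.1 ^ 2 + p.2 ^ 2) / 2) := by
  have ht : 0 < p.1 ^ 2 + p.2 ^ 2 := hp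
  have : (minv p).1 ^ 2 + (minv p).2 ^ 2 = mc (p.1 ^ 2 + p.2 ^ 2) ^ 2 * (p.1 ^ 2 + p.2 ^ 2) := by
    unfold minv; ring
  rw [this, mc_sq ht, div_mul_cancel₀ _ ht.ne']

lemma marsaglia_minv {p : ℝ × ℝ} (hp : p ∈ Tset) : marsaglia (minv p) = p := by
  have ht : 0 < p.1 ^ 2 + p.2 ^ 2 := hp
  set t := p.1 ^ 2 + p.2 ^ 2 with htdef
  have hQ := sq_add_sq_minv hp
  have key : mc t * Real.sqrt (-2 * Real.log (Real.exp (-t/2)) / Real.exp (-t/2)) = 1 := by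
    rw [Real.log_exp]
    unfold mc
    rw [← Real.sqrt_mul (div_pos (Real.exp_pos _) ht).le, ← Real.sqrt_one]
    congr 1
    have he := (Real.exp_pos (-t/2)).ne'
    field_simp
  unfold marsaglia
  rw [hQ]
  unfold minv
  simp only
  refine Prod.ext ?_ ?_ <;>
    · dsimp only
      rw [mul_assoc, key, mul_one]

lemma marsaglia_mem_Tset {q : ℝ × ℝ} (hq : q ∈ puncturedDisk) : marsaglia q ∈ Tset := by
  obtain ⟨hs, hs1⟩ := hq
  have hlog : Real.log (q.1 ^ 2 + q.2 ^ 2) < 0 := Real.log_neg hs hs1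
  have hw : 0 < -2 * Real.log (q.1 ^ 2 + q.2 ^ 2) / (q.1 ^ 2 + q.2 ^ 2) :=
    div_pos (by linarith) hs
  have h1 : (marsaglia q).1 ^ 2 + (marsaglia q).2 ^ 2
      = (q.1 ^ 2 + q.2 ^ 2) * (-2 * Real.log (q.1 ^ 2 + q.2 ^ 2) / (q.1 ^ 2 + q.2 ^ 2)) := by
    unfold marsaglia
    simp only
    rw [mul_pow, mul_pow, Real.sq_sqrt hw.le]
    ring
  have : 0 < (marsaglia q).1 ^ 2 + (marsaglia q).2 ^ 2 := by
    rw [h1]; exact mul_pos hs hw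
  exact this

lemma minv_marsaglia {q : ℝ × ℝ} (hq : q ∈ puncturedDisk) : minv (marsaglia q) = q := by
  obtain ⟨hs, hs1⟩ := hq
  set s := q.1 ^ 2 + q.2 ^ 2 with hsdef
  have hlog : Real.log s < 0 := Real.log_neg hs hs1
  have hw : 0 < -2 * Real.log s / s := div_pos (by linarith) hs
  have h1 : (marsaglia q).1 ^ 2 + (marsaglia q).2 ^ 2 = -2 * Real.log s := by
    have : (marsaglia q).1 ^ 2 + (marsaglia q).2 ^ 2 = s * (-2 * Real.log s / s) := by
      unfold marsaglia
      simp only [← hsdef]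
      rw [mul_pow, mul_pow, Real.sq_sqrt hw.le]
      ring
    rw [this, mul_div_cancel₀ _ hs.ne']
  have key : mc (-2 * Real.log s) * Real.sqrt (-2 * Real.log s / s) = mc (-2 * Real.log s) *
      Real.sqrt (-2 * Real.log s / s) := rfl
  have key2 : Real.sqrt (-2 * Real.log s / s) * mc (-2 * Real.log s) = 1 := by
    unfold mc
    rw [← Real.sqrt_mul hw.le, ← Real.sqrt_one]
    congr 1
    rw [show -(-2 * Real.log s) / 2 = Real.log s by ring, Real.exp_log hs]
    field_simp [hlog.ne, hs.ne']
  unfold minv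
  rw [h1]
  unfold marsaglia
  simp only [← hsdef]
  refine Prod.ext ?_ ?_ <;>
    · dsimp only
      rw [mul_assoc, key2, mul_one]

lemma minv_image : minv '' Tset = puncturedDisk := by
  apply Set.Subset.antisymm
  · rintro _ ⟨p, hp, rfl⟩
    have ht : 0 < p.1 ^ 2 + p.2 ^ 2 := hp
    have h := sq_add_sq_minv hp
    constructor
    · rw [h]; exact Real.exp_pos _
    · rw [h]; exact Real.exp_lt_one_iff.mpr (by linarith [ht] : -(p.1^2+p.2^2)/2 < 0)
  · intro q hq
    exact ⟨marsaglia q, marsaglia_mem_Tset hq, minv_marsaglia hq⟩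

lemma minv_injOn : Set.InjOn minv Tset := fun p hp p' hp' h => by
  rw [← marsaglia_minv hp, ← marsaglia_minv hp', h]

lemma measurable_marsaglia : Measurable marsaglia := by
  unfold marsaglia
  have h : Measurable fun p : ℝ × ℝ =>
      Real.sqrt (-2 * Real.log (p.1 ^ 2 + p.2 ^ 2) / (p.1 ^ 2 + p.2 ^ 2)) := by
    apply Real.continuous_sqrt.measurable.comp
    apply Measurable.div _ (by fun_prop)
    exact (Real.measurable_log.comp (by fun_prop)).const_mul _
  exact ((measurable_fst.mul h).prodMk (measurable_snd.mul h))

lemma measurable_minv : Measurable minv := by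
  unfold minv mc
  have h : Measurable fun p : ℝ × ℝ =>
      Real.sqrt (Real.exp (-(p.1 ^ 2 + p.2 ^ 2) / 2) / (p.1 ^ 2 + p.2 ^ 2)) := by
    apply Real.continuous_sqrt.measurable.comp
    fun_prop
  exact ((measurable_fst.mul h).prodMk (measurable_snd.mul h))

lemma measurableSet_Tset : MeasurableSet Tset :=
  (isOpen_lt continuous_const ((continuous_fst.pow 2).add (continuous_snd.pow 2))).measurableSet

lemma map_minv_eq :
    Measure.map minv ((volume.restrict Tset).withDensity fun p => ENNReal.ofReal |(mB p).det|)
      = volume.restrict puncturedDisk := by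
  rw [← minv_image]
  exact map_withDensity_abs_det_fderiv_eq_addHaar volume measurableSet_Tset.nullMeasurableSet
    (fun p hp => (hasFDerivAt_minv hp).hasFDerivWithinAt) minv_injOn

lemma map_marsaglia_restrict :
    Measure.map marsaglia (volume.restrict puncturedDisk)
      = (volume.restrict Tset).withDensity fun p => ENNReal.ofReal |(mB p).det| := by
  set ν := (volume.restrict Tset).withDensity fun p => ENNReal.ofReal |(mB p).det| with hν
  rw [← map_minv_eq, Measure.map_map measurable_marsaglia measurable_minv]
  have hT : ∀ᵐ p ∂ν, p ∈ Tset := by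
    rw [ae_iff]
    have : {p : ℝ × ℝ | ¬p ∈ Tset} = Tsetᶜ := rfl
    rw [this, hν, withDensity_apply _ measurableSet_Tset.compl,
      Measure.restrict_restrict measurableSet_Tset.compl, Set.compl_inter_self,
      Measure.restrict_empty, lintegral_zero_measure]
  have hae : (marsaglia ∘ minv) =ᵐ[ν] id := by
    filter_upwards [hT] with p hp
    exact marsaglia_minv hp
  rw [Measure.map_congr hae, Measure.map_id]

lemma prod_withDensity_vol {f g : ℝ → ℝ≥0∞} (hf : Measurable f) (hg : Measurable g)
    [SigmaFinite (volume.withDensity f)] [SigmaFinite (volume.withDensity g)] :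
    (volume.withDensity f).prod (volume.withDensity g)
      = (volume : Measure (ℝ × ℝ)).withDensity fun p => f p.1 * g p.2 := by
  refine Measure.prod_eq fun s t hs ht => ?_
  rw [withDensity_apply _ (hs.prod ht), Measure.volume_eq_prod, ← Measure.prod_restrict,
    lintegral_prod_mul hf.aemeasurable hg.aemeasurable,
    withDensity_apply _ hs, withDensity_apply _ ht]

lemma gauss_prod_eq :
    (gaussianReal 0 1).prod (gaussianReal 0 1)
      = (volume : Measure (ℝ × ℝ)).withDensity
          fun p => gaussianPDF 0 1 p.1 * gaussianPDF 0 1 p.2 := by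
  haveI : SigmaFinite (volume.withDensity (gaussianPDF 0 1)) := by
    rw [← gaussianReal_of_var_ne_zero 0 one_ne_zero]; infer_instance
  rw [gaussianReal_of_var_ne_zero 0 one_ne_zero]
  exact prod_withDensity_vol (measurable_gaussianPDF 0 1) (measurable_gaussianPDF 0 1)

lemma volume_Tset_compl : volume Tsetᶜ = 0 := by
  have hzero : volume ({((0 : ℝ), (0 : ℝ))} : Set (ℝ × ℝ)) = 0 := by
    have h : ({((0 : ℝ), (0 : ℝ))} : Set (ℝ × ℝ)) = ({(0 : ℝ)} : Set ℝ) ×ˢ ({(0 : ℝ)} : Set ℝ) := by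
      rw [Set.singleton_prod_singleton]
    rw [h, Measure.volume_eq_prod, Measure.prod_prod, Real.volume_singleton, mul_zero]
  apply measure_mono_null _ hzero
  intro p hp
  simp only [Tset, Set.mem_compl_iff, Set.mem_setOf_eq, not_lt] at hp
  have h1 : p.1 = 0 := by nlinarith [sq_nonneg p.1, sq_nonneg p.2]
  have h2 : p.2 = 0 := by nlinarith [sq_nonneg p.1, sq_nonneg p.2]
  simp [Set.mem_singleton_iff, Prod.ext_iff, h1, h2]

lemma pointwise_density {p : ℝ × ℝ} (hp : p ∈ Tset) :
    ENNReal.ofReal |(mB p).det|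
      = ENNReal.ofReal π * (gaussianPDF 0 1 p.1 * gaussianPDF 0 1 p.2) := by
  have ht : 0 < p.1 ^ 2 + p.2 ^ 2 := hp
  rw [mB_det hp, abs_neg, abs_of_pos (by positivity), gaussianPDF_def]
  simp only
  rw [← ENNReal.ofReal_mul (gaussianPDFReal_pos 0 1 p.1 one_ne_zero).le,
    ← ENNReal.ofReal_mul Real.pi_pos.le]
  congr 1
  unfold gaussianPDFReal
  have hs : Real.sqrt (2 * π) * Real.sqrt (2 * π) = 2 * π :=
    Real.mul_self_sqrt (by positivity)
  simp only [NNReal.coe_one, mul_one, sub_zero]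
  rw [show π * ((Real.sqrt (2 * π))⁻¹ * rexp (-p.1 ^ 2 / 2) *
        ((Real.sqrt (2 * π))⁻¹ * rexp (-p.2 ^ 2 / 2)))
      = π * ((Real.sqrt (2 * π))⁻¹ * (Real.sqrt (2 * π))⁻¹) *
        (rexp (-p.1 ^ 2 / 2) * rexp (-p.2 ^ 2 / 2)) by ring,
    ← Real.exp_add, ← mul_inv, hs,
    show -p.1 ^ 2 / 2 + -p.2 ^ 2 / 2 = -(p.1 ^ 2 + p.2 ^ 2) / 2 by ring]
  have hπ := Real.pi_pos
  field_simp

lemma withDensity_det_eq :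
    ((volume.restrict Tset).withDensity fun p => ENNReal.ofReal |(mB p).det|)
      = ENNReal.ofReal π • ((gaussianReal 0 1).prod (gaussianReal 0 1)) := by
  have hm : Measurable fun p : ℝ × ℝ => gaussianPDF 0 1 p.1 * gaussianPDF 0 1 p.2 :=
    ((measurable_gaussianPDF 0 1).comp measurable_fst).mul
      ((measurable_gaussianPDF 0 1).comp measurable_snd)
  rw [gauss_prod_eq, ← withDensity_smul _ hm, ← withDensity_indicator measurableSet_Tset]
  refine withDensity_congr_ae ?_
  have hT : ∀ᵐ p : ℝ × ℝ ∂volume, p ∈ Tset := by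
    rw [ae_iff]
    exact volume_Tset_compl
  filter_upwards [hT] with p hp
  rw [Set.indicator_of_mem hp, pointwise_density hp]
  rfl

lemma volume_disk : volume puncturedDisk = ENNReal.ofReal π := by
  have h := congrArg (fun μ : Measure (ℝ × ℝ) => μ Set.univ)
    (map_marsaglia_restrict.trans withDensity_det_eq)
  simp only [Measure.map_apply measurable_marsaglia MeasurableSet.univ, Set.preimage_univ,
    Measure.restrict_apply MeasurableSet.univ, Set.univ_inter, Measure.smul_apply,
    smul_eq_mul] at h
  rw [h, measure_univ, mul_one]

/-- Marsaglia polar method: if `(U, V)` is uniformly distributed on the punctured open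
unit disk, then `(X, Y) = marsaglia (U, V)` has as joint law the product of two standard
Gaussian measures; in particular `X` and `Y` are independent standard normals. -/
theorem marsaglia_polar_method :
    ((volume puncturedDisk)⁻¹ • (volume : Measure (ℝ × ℝ)).restrict puncturedDisk).map
        marsaglia =
      (gaussianReal 0 1).prod (gaussianReal 0 1) := by
  rw [Measure.map_smul, map_marsaglia_restrict, withDensity_det_eq, volume_disk, smul_smul,
    ENNReal.inv_mul_cancel (ENNReal.ofReal_pos.mpr Real.pi_pos).ne' ENNReal.ofReal_ne_top,
    one_smul]
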